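/- Let α, β ∈ ℝ with β ≠ 0 and β not a positive integer. In the ring ℝ[[X]] of formal power series, let D = Σ_{m=0}^∞ (−αβ)^m X^m/(m!·(1−β)_m), which has constant term 1 and is therefore invertible, and let N = (X/β)·D′, i.e. N = Σ_{m=1}^∞ (−1)^m α^m β^{m−1} X^m/((m−1)!·(1−β)_m). Then the formal power series w := N·D^{−1} has zero constant term and satisfies the formal Riccati equation X·w′ − β·w + β·w² + α·X = 0 in ℝ[[X]]. (This is the x-only part of the paper's rational form (riccrat) of the Riccati solution, with denominator coefficients b_{m,0} = (−αβ)^m/(m!·(1−β)_m).) -/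

import Mathlib

open PowerSeries

/-- `D = ∑_m (-αβ)^m X^m / (m! (1-β)_m)`, the denominator series of the paper's rational
form of the Riccati solution ((c)_k is the Pochhammer symbol). -/
noncomputable def riccatiDenom (α β : ℝ) : PowerSeries ℝ :=
  PowerSeries.mk fun m : ℕ =>
    (-(α * β)) ^ m / ((m.factorial : ℝ) * (ascPochhammer ℝ m).eval (1 - β))

/-- `N = ∑_{m≥1} (-1)^m α^m β^(m-1) X^m / ((m-1)! (1-β)_m)`, the numerator series. -/
noncomputable def riccatiNumer (α β : ℝ) : PowerSeries ℝ :=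
  PowerSeries.mk fun m : ℕ =>
    if m = 0 then 0
    else (-1 : ℝ) ^ m * α ^ m * β ^ (m - 1) /
      (((m - 1).factorial : ℝ) * (ascPochhammer ℝ m).eval (1 - β))

lemma pochhammer_ne_zero {β : ℝ} (hβ : ∀ k : ℕ, 0 < k → β ≠ (k : ℝ)) (m : ℕ) :
    (ascPochhammer ℝ m).eval (1 - β) ≠ 0 := by
  induction m with
  | zero => simp
  | succ n ih =>
    rw [ascPochhammer_succ_eval]
    refine mul_ne_zero ih ?_
    have h := hβ (n + 1) (Nat.succ_pos n)
    intro h0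
    apply h
    push_cast
    linarith

lemma riccati_CβN (α β : ℝ) (hβ : ∀ k : ℕ, 0 < k → β ≠ (k : ℝ)) :
    PowerSeries.C β * riccatiNumer α β =
      PowerSeries.X * PowerSeries.derivative ℝ (riccatiDenom α β) := by
  ext n
  cases n with
  | zero => simp [riccatiNumer, riccatiDenom]
  | succ n =>
    rw [coeff_succ_X_mul, coeff_derivative]
    simp only [riccatiNumer, riccatiDenom, coeff_mk, PowerSeries.coeff_C_mul,
      Nat.succ_ne_zero, if_false, Nat.add_sub_cancel]
    have hP := pochhammer_ne_zero hβ (n + 1)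
    have hf : ((n.factorial : ℝ)) ≠ 0 := Nat.cast_ne_zero.mpr n.factorial_ne_zero
    have hf1 : (((n+1).factorial : ℝ)) ≠ 0 := Nat.cast_ne_zero.mpr (n+1).factorial_ne_zero
    rw [Nat.factorial_succ] at hf1 ⊢
    push_cast
    field_simp
    ring

lemma riccati_N' (α β : ℝ) (hβ : ∀ k : ℕ, 0 < k → β ≠ (k : ℝ)) :
    PowerSeries.derivative ℝ (riccatiNumer α β) =
      PowerSeries.derivative ℝ (riccatiDenom α β) - PowerSeries.C α * riccatiDenom α β := by
  ext n
  rw [map_sub, coeff_derivative, coeff_derivative]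
  simp only [riccatiNumer, riccatiDenom, coeff_mk, PowerSeries.coeff_C_mul,
    Nat.succ_ne_zero, if_false, Nat.add_sub_cancel]
  have hP := pochhammer_ne_zero hβ n
  have hP1 := pochhammer_ne_zero hβ (n + 1)
  have hf : ((n.factorial : ℝ)) ≠ 0 := Nat.cast_ne_zero.mpr n.factorial_ne_zero
  have hb : (1 - β + n) ≠ 0 := by
    have h := hβ (n + 1) (Nat.succ_pos n)
    intro h0; apply h; push_cast; linarith
  rw [ascPochhammer_succ_eval, Nat.factorial_succ]
  push_cast
  field_simp
  ring

theorem riccati_formal_rational (α β : ℝ) (hβ0 : β ≠ 0)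
    (hβ : ∀ k : ℕ, 0 < k → β ≠ (k : ℝ)) :
    PowerSeries.constantCoeff (riccatiDenom α β) = 1 ∧
    IsUnit (riccatiDenom α β) ∧
    riccatiNumer α β =
      PowerSeries.C β⁻¹ * PowerSeries.X * PowerSeries.derivative ℝ (riccatiDenom α β) ∧
    PowerSeries.constantCoeff (riccatiNumer α β * (riccatiDenom α β)⁻¹) = 0 ∧
    PowerSeries.X *
        PowerSeries.derivative ℝ (riccatiNumer α β * (riccatiDenom α β)⁻¹)
      - PowerSeries.C β * (riccatiNumer α β * (riccatiDenom α β)⁻¹)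
      + PowerSeries.C β * (riccatiNumer α β * (riccatiDenom α β)⁻¹) ^ 2
      + PowerSeries.C α * PowerSeries.X = 0 := by
  set D := riccatiDenom α β with hD
  set N := riccatiNumer α β with hNdef
  have hc : PowerSeries.constantCoeff D = 1 := by
    simp [hD, riccatiDenom, PowerSeries.constantCoeff_mk]
  have hc0 : PowerSeries.constantCoeff D ≠ 0 := by rw [hc]; exact one_ne_zero
  have hDI : D * D⁻¹ = 1 := PowerSeries.mul_inv_cancel D hc0
  have hUnit : IsUnit D := IsUnit.of_mul_eq_one D⁻¹ hDI
  have hCβN : PowerSeries.C β * N = PowerSeries.X * PowerSeries.derivative ℝ D :=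
    riccati_CβN α β hβ
  have hCβ : PowerSeries.C β⁻¹ * PowerSeries.C β = 1 := by
    rw [← map_mul, inv_mul_cancel₀ hβ0, map_one]
  have hNX : N = PowerSeries.C β⁻¹ * PowerSeries.X * PowerSeries.derivative ℝ D := by
    calc N = (PowerSeries.C β⁻¹ * PowerSeries.C β) * N := by rw [hCβ, one_mul]
    _ = PowerSeries.C β⁻¹ * (PowerSeries.C β * N) := by ring
    _ = PowerSeries.C β⁻¹ * PowerSeries.X * PowerSeries.derivative ℝ D := by
        rw [hCβN]; ring
  have hN0 : PowerSeries.constantCoeff N = 0 := by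
    simp [hNdef, riccatiNumer, PowerSeries.constantCoeff_mk]
  have hw0 : PowerSeries.constantCoeff (N * D⁻¹) = 0 := by
    rw [map_mul, hN0, zero_mul]
  refine ⟨hc, hUnit, hNX, hw0, ?_⟩
  set w := N * D⁻¹ with hwdef
  have hwD : w * D = N := by
    rw [hwdef, mul_assoc, PowerSeries.inv_mul_cancel D hc0, mul_one]
  have hder : PowerSeries.derivative ℝ N =
      PowerSeries.derivative ℝ w * D + w * PowerSeries.derivative ℝ D := by
    rw [← hwD, Derivation.leibniz, smul_eq_mul, smul_eq_mul]
    ring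
  have hN' : PowerSeries.derivative ℝ N =
      PowerSeries.derivative ℝ D - PowerSeries.C α * D := riccati_N' α β hβ
  have hDne : D ≠ 0 := fun h => hc0 (by rw [h, map_zero])
  have hD2 : D ^ 2 ≠ 0 := pow_ne_zero 2 hDne
  have key : (PowerSeries.X * PowerSeries.derivative ℝ w
      - PowerSeries.C β * w + PowerSeries.C β * w ^ 2
      + PowerSeries.C α * PowerSeries.X) * D ^ 2 = 0 := by
    linear_combination (PowerSeries.X * D) * hN'
      + (N - D) * hCβN
      + (-(PowerSeries.X * PowerSeries.derivative ℝ D) - PowerSeries.C β * D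
          + PowerSeries.C β * N + PowerSeries.C β * (w * D)) * hwD
      - (PowerSeries.X * D) * hder
  rcases mul_eq_zero.mp key with h | h
  · exact h
  · exact absurd h hD2
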